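/- Let (X,d,μ) be a space of homogeneous type with μ(B) ≥ c r(B)^n for all balls B, and 0 < α < n. There is a constant C such that for every ball B and every bounded measurable f with compact support contained in X ∖ 4B, one has sup_{x∈B} T_α(|f|)(x) ≤ C ⨍_B T_α(|f|) dμ. -/
import Mathlib


open MeasureTheory Metric Set ENNReal NNReal

noncomputable section

variable {X : Type*} [MetricSpace X] [MeasurableSpace X] [BorelSpace X]

/-- Average of an `ℝ≥0∞`-valued function over a ball, w.r.t. `μ`. -/
def avgBX (μ : Measure X) (c : X) (r : ℝ) (g : X → ℝ≥0∞) : ℝ≥0∞ :=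
  (μ (ball c r))⁻¹ * ∫⁻ y in ball c r, g y ∂μ

/-- `(X, d, μ)` is a space of homogeneous type: balls have positive finite measure
and `μ` is doubling. -/
def IsSHT (μ : Measure X) : Prop :=
  (∀ (c : X) (r : ℝ), 0 < r → μ (ball c r) < ∞) ∧
  (∀ (c : X) (r : ℝ), 0 < r → 0 < μ (ball c r)) ∧
  ∃ D : ℝ≥0, ∀ (c : X) (r : ℝ), 0 < r → μ (ball c (2 * r)) ≤ D * μ (ball c r)

/-- Polynomial growth from below: `μ(B) ≥ c r(B)^n`. -/
def GrowthGE (μ : Measure X) (cl nd : ℝ) : Prop :=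
  ∀ (x : X) (r : ℝ), 0 < r → ENNReal.ofReal (cl * r ^ nd) ≤ μ (ball x r)

/-- Fractional maximal operator `M_β` on `(X, μ)` (`β = 0` gives the
Hardy–Littlewood maximal operator). -/
def maxFX (μ : Measure X) (β : ℝ) (g : X → ℝ≥0∞) (x : X) : ℝ≥0∞ :=
  ⨆ (c : X) (r : ℝ) (_ : 0 < r) (_ : x ∈ ball c r),
    ENNReal.ofReal (r ^ β) * avgBX μ c r g

/-- The `A_{p,q}(μ)` condition for `1 < p ≤ q < ∞`. -/
def ApqX (μ : Measure X) (p q : ℝ) (w : X → ℝ) : Prop :=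
  ∃ C : ℝ≥0, ∀ (c : X) (r : ℝ), 0 < r →
    (avgBX μ c r (fun x => ENNReal.ofReal (w x ^ q))) ^ (1 / q) *
      (avgBX μ c r (fun x => ENNReal.ofReal (w x ^ (-(p / (p - 1)))))) ^ (1 - 1 / p) ≤ C

/-- The `A_{1,q}(μ)` condition. -/
def A1qX (μ : Measure X) (q : ℝ) (w : X → ℝ) : Prop :=
  ∃ C : ℝ≥0, ∀ (c : X) (r : ℝ), 0 < r →
    ∀ᵐ x ∂(μ.restrict (ball c r)),
      (avgBX μ c r (fun y => ENNReal.ofReal (w y ^ q))) ^ (1 / q) ≤ C * ENNReal.ofReal (w x)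

/-- A doubling weight: the measure `w dμ` is doubling. -/
def WeightDoubling (μ : Measure X) (w : X → ℝ) : Prop :=
  ∃ D : ℝ≥0, ∀ (c : X) (r : ℝ), 0 < r →
    (∫⁻ x in ball c (2 * r), ENNReal.ofReal (w x) ∂μ) ≤
      D * ∫⁻ x in ball c r, ENNReal.ofReal (w x) ∂μ

/-- The fractional integral operator `T_α` applied to an `ℝ≥0∞`-valued function. -/
def TalphaE (μ : Measure X) (α : ℝ) (g : X → ℝ≥0∞) (x : X) : ℝ≥0∞ :=
  ∫⁻ y, (ENNReal.ofReal (dist x y ^ α) / μ (ball x (dist x y))) * g y ∂μ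

/-- The fractional integral operator `T_α` on real-valued functions. -/
def TalphaR (μ : Measure X) (α : ℝ) (f : X → ℝ) (x : X) : ℝ :=
  ∫ y, (dist x y ^ α / (μ (ball x (dist x y))).toReal) * f y ∂μ

theorem statement15
    (μ : Measure X) (hμ : IsSHT μ)
    (cl nd : ℝ) (hcl : 0 < cl) (hnd : 0 < nd) (hgrowth : GrowthGE μ cl nd)
    (α : ℝ) (hα0 : 0 < α) (hαn : α < nd) :
    ∃ C : ℝ≥0, ∀ (c : X) (r : ℝ), 0 < r →
      ∀ f : X → ℝ, Measurable f → (∃ K : ℝ, ∀ x, |f x| ≤ K) →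
        IsCompact (tsupport f) → tsupport f ⊆ (ball c (4 * r))ᶜ →
        ∀ x ∈ ball c r,
          TalphaE μ α (fun y => (‖f y‖₊ : ℝ≥0∞)) x ≤
            C * avgBX μ c r (fun y => TalphaE μ α (fun z => (‖f z‖₊ : ℝ≥0∞)) y) := by
  obtain ⟨hfin, hpos, D, hD⟩ := hμ
  set D' : ℝ≥0 := D + 1 with hD'def
  have hD2ne : ((D' ^ 2 : ℝ≥0) : ℝ≥0∞) ≠ 0 := ENNReal.coe_ne_zero.mpr (by positivity)
  have hdb : ∀ (z : X) (s : ℝ), 0 < s → μ (ball z (2 * s)) ≤ (D' : ℝ≥0∞) * μ (ball z s) := by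
    intro z s hs
    refine (hD z s hs).trans (mul_le_mul_left ?_ _)
    exact ENNReal.coe_le_coe.mpr (by simp [hD'def])
  have hdb4 : ∀ (z : X) (s : ℝ), 0 < s →
      μ (ball z (4 * s)) ≤ ((D' ^ 2 : ℝ≥0) : ℝ≥0∞) * μ (ball z s) := by
    intro z s hs
    have h1 : μ (ball z (4 * s)) ≤ (D' : ℝ≥0∞) * μ (ball z (2 * s)) := by
      have h := hdb z (2 * s) (by linarith)
      rwa [show (2 : ℝ) * (2 * s) = 4 * s by ring] at h
    refine h1.trans ?_
    refine le_trans (mul_le_mul_right (hdb z s hs) _) ?_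
    rw [← mul_assoc]
    gcongr
    push_cast
    rw [sq]
  set Cα : ℝ≥0 := Real.toNNReal ((5 / 3 : ℝ) ^ α) with hCα
  refine ⟨Cα * D' ^ 2, ?_⟩
  intro c r hr f hf _ _ hsupp x hx
  set g : X → ℝ≥0∞ := fun y => ((‖f y‖₊ : ℝ≥0∞)) with hg
  set C' : ℝ≥0∞ := ((Cα * D' ^ 2 : ℝ≥0) : ℝ≥0∞) with hC'
  have hC'ne : C' ≠ ∞ := ENNReal.coe_ne_top
  have key : ∀ x' ∈ ball c r, ∀ y : X,
      ENNReal.ofReal (dist x y ^ α) / μ (ball x (dist x y)) * g y ≤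
      C' * (ENNReal.ofReal (dist x' y ^ α) / μ (ball x' (dist x' y)) * g y) := by
    intro x' hx' y
    by_cases hfy : f y = 0
    · simp [hg, hfy]
    · have hy : y ∈ tsupport f := subset_tsupport f (by simpa using hfy)
      have hy4 : 4 * r ≤ dist y c := by
        have h := hsupp hy
        simpa [mem_ball, not_lt] using h
      have hxc : dist x c < r := mem_ball.mp hx
      have hx'c : dist x' c < r := mem_ball.mp hx'
      set t := dist x y with ht
      set t' := dist x' y with ht'
      have e1 : dist y x = t := by rw [ht, dist_comm]
      have e2 : dist y x' = t' := by rw [ht', dist_comm]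
      have h3r : 3 * r ≤ t := by
        have h := dist_triangle y x c
        rw [e1] at h; linarith
      have h3r' : 3 * r ≤ t' := by
        have h := dist_triangle y x' c
        rw [e2] at h; linarith
      have htt' : t ≤ t' + 2 * r := by
        have h1 := dist_triangle x x' y
        have h2 := dist_triangle x c x'
        have h3 : dist c x' = dist x' c := dist_comm c x'
        linarith [ht, ht']
      have ht't : t' ≤ t + 2 * r := by
        have h1 := dist_triangle x' x y
        have h2 := dist_triangle x' c x
        have h3 : dist c x = dist x c := dist_comm c x
        linarith [ht, ht']
      have htpos : 0 < t := by linarith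
      have ht'pos : 0 < t' := by linarith
      have hle : t ≤ 5 / 3 * t' := by linarith
      have hnum : ENNReal.ofReal (t ^ α) ≤ (Cα : ℝ≥0∞) * ENNReal.ofReal (t' ^ α) := by
        have h1 : t ^ α ≤ (5 / 3 * t') ^ α :=
          Real.rpow_le_rpow dist_nonneg hle hα0.le
        have h2 : ((5 / 3 : ℝ) * t') ^ α = (5 / 3 : ℝ) ^ α * t' ^ α :=
          Real.mul_rpow (by norm_num) dist_nonneg
        calc ENNReal.ofReal (t ^ α)
            ≤ ENNReal.ofReal ((5 / 3 : ℝ) ^ α * t' ^ α) :=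
              ENNReal.ofReal_le_ofReal (by rw [← h2]; exact h1)
          _ = ENNReal.ofReal ((5 / 3 : ℝ) ^ α) * ENNReal.ofReal (t' ^ α) :=
              ENNReal.ofReal_mul (Real.rpow_nonneg (by norm_num) _)
          _ = (Cα : ℝ≥0∞) * ENNReal.ofReal (t' ^ α) := rfl
      have hball : ball x' t' ⊆ ball x (4 * t) := by
        apply ball_subset_ball'
        have hxx : dist x' x ≤ 2 * r := by
          have h1 := dist_triangle x' c x
          have h2 : dist c x = dist x c := dist_comm c x
          linarith
        linarith
      have hden : μ (ball x' t') ≤ ((D' ^ 2 : ℝ≥0) : ℝ≥0∞) * μ (ball x t) :=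
        (measure_mono hball).trans (hdb4 x t htpos)
      have hinv : (μ (ball x t))⁻¹ ≤ ((D' ^ 2 : ℝ≥0) : ℝ≥0∞) * (μ (ball x' t'))⁻¹ := by
        have h1 : (((D' ^ 2 : ℝ≥0) : ℝ≥0∞) * μ (ball x t))⁻¹ ≤ (μ (ball x' t'))⁻¹ :=
          ENNReal.inv_le_inv' hden
        have h2 : (((D' ^ 2 : ℝ≥0) : ℝ≥0∞) * μ (ball x t))⁻¹ =
            ((D' ^ 2 : ℝ≥0) : ℝ≥0∞)⁻¹ * (μ (ball x t))⁻¹ :=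
          ENNReal.mul_inv (Or.inl hD2ne) (Or.inl ENNReal.coe_ne_top)
        calc (μ (ball x t))⁻¹
            = ((D' ^ 2 : ℝ≥0) : ℝ≥0∞) * (((D' ^ 2 : ℝ≥0) : ℝ≥0∞)⁻¹ * (μ (ball x t))⁻¹) := by
              rw [← mul_assoc, ENNReal.mul_inv_cancel hD2ne ENNReal.coe_ne_top, one_mul]
          _ ≤ ((D' ^ 2 : ℝ≥0) : ℝ≥0∞) * (μ (ball x' t'))⁻¹ :=
              mul_le_mul_right (h2 ▸ h1) _
      have hker : ENNReal.ofReal (t ^ α) / μ (ball x t) ≤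
          C' * (ENNReal.ofReal (t' ^ α) / μ (ball x' t')) := by
        rw [div_eq_mul_inv, div_eq_mul_inv]
        calc ENNReal.ofReal (t ^ α) * (μ (ball x t))⁻¹
            ≤ ((Cα : ℝ≥0∞) * ENNReal.ofReal (t' ^ α)) *
                (((D' ^ 2 : ℝ≥0) : ℝ≥0∞) * (μ (ball x' t'))⁻¹) :=
              mul_le_mul' hnum hinv
          _ = C' * (ENNReal.ofReal (t' ^ α) * (μ (ball x' t'))⁻¹) := by
              rw [hC']; push_cast; ring
      calc ENNReal.ofReal (t ^ α) / μ (ball x t) * g y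
          ≤ C' * (ENNReal.ofReal (t' ^ α) / μ (ball x' t')) * g y :=
            mul_le_mul_left hker _
        _ = C' * (ENNReal.ofReal (t' ^ α) / μ (ball x' t') * g y) := by rw [mul_assoc]
  have Tle : ∀ x' ∈ ball c r, TalphaE μ α g x ≤ C' * TalphaE μ α g x' := by
    intro x' hx'
    calc TalphaE μ α g x
        ≤ ∫⁻ y, C' * (ENNReal.ofReal (dist x' y ^ α) / μ (ball x' (dist x' y)) * g y) ∂μ :=
          lintegral_mono (key x' hx')
      _ = C' * TalphaE μ α g x' := lintegral_const_mul' _ _ hC'ne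
  have hmeasB : MeasurableSet (ball c r) := measurableSet_ball
  have h1 : μ (ball c r) * TalphaE μ α g x ≤
      C' * ∫⁻ x' in ball c r, TalphaE μ α g x' ∂μ := by
    have hmono : ∫⁻ x', (ball c r).indicator (fun _ => TalphaE μ α g x) x' ∂μ ≤
        ∫⁻ x', (ball c r).indicator (fun x' => C' * TalphaE μ α g x') x' ∂μ := by
      refine lintegral_mono fun x' => ?_
      by_cases h : x' ∈ ball c r
      · simpa [Set.indicator_of_mem h] using Tle x' h
      · simp [Set.indicator_of_notMem h]
    rw [lintegral_indicator hmeasB, lintegral_indicator hmeasB,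
      setLIntegral_const, lintegral_const_mul' _ _ hC'ne, mul_comm] at hmono
    exact hmono
  have hBne : μ (ball c r) ≠ 0 := (hpos c r hr).ne'
  have hBfin : μ (ball c r) ≠ ∞ := (hfin c r hr).ne
  calc TalphaE μ α g x
      = (μ (ball c r))⁻¹ * (μ (ball c r) * TalphaE μ α g x) := by
        rw [← mul_assoc, ENNReal.inv_mul_cancel hBne hBfin, one_mul]
    _ ≤ (μ (ball c r))⁻¹ * (C' * ∫⁻ x' in ball c r, TalphaE μ α g x' ∂μ) :=
        mul_le_mul_right h1 _
    _ = C' * avgBX μ c r (fun y => TalphaE μ α g y) := by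
        simp only [avgBX]; ring
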